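/- (Mehta integral, rank-one/known cases) For ω > 0 and g₀ = 1, one has ∫_{ℝⁿ} ∏_{1≤j<k≤n} (x_j − x_k)² · ∏_{j=1}^n e^{−ωx_j²} dx = (2π)^{n/2}/(2ω)^{n(n−1)/2 + n/2} · ∏_{j=1}^n j!. -/

import Mathlib

open MeasureTheory Finset Nat

namespace MehtaAux

open Polynomial Real Filter

noncomputable def gauss : ℝ → ℝ := fun x => Real.exp (-(x ^ 2 / 2))

lemma gauss_eq (x : ℝ) : gauss x = Real.exp (-(1/2 : ℝ) * x ^ 2) := by
  simp only [gauss]; ring_nf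

lemma integrable_pow_mul_gauss' {b : ℝ} (hb : 0 < b) (n : ℕ) :
    Integrable fun x : ℝ => x ^ n * Real.exp (-b * x ^ 2) := by
  have h2 : (0:ℝ) < b / 2 := by linarith
  set C : ℝ := 1 + n ! / (b/2) ^ n with hC
  have hC1 : (1:ℝ) ≤ C := by
    have h : (0:ℝ) ≤ n ! / (b/2) ^ n := by positivity
    rw [hC]; linarith
  apply Integrable.mono' ((integrable_exp_neg_mul_sq h2).const_mul C)
  · exact (Continuous.aestronglyMeasurable (by continuity))
  · filter_upwards with x
    have hx2 : (0:ℝ) ≤ b/2 * x ^ 2 := by positivity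
    have hexp1 : (1:ℝ) ≤ Real.exp (b/2 * x ^ 2) := Real.one_le_exp hx2
    have hexppos := Real.exp_pos (b/2 * x ^ 2)
    have h1 : |x| ^ n ≤ C * Real.exp (b/2 * x ^ 2) := by
      rcases le_or_gt (|x|) 1 with h | h
      · calc |x| ^ n ≤ 1 := pow_le_one₀ (abs_nonneg x) h
          _ = 1 * 1 := by norm_num
          _ ≤ C * Real.exp (b/2 * x ^ 2) :=
              mul_le_mul hC1 hexp1 zero_le_one (le_trans zero_le_one hC1)
      · have key : (b/2 * x ^ 2) ^ n / (n ! : ℝ) ≤ Real.exp (b/2 * x ^ 2) :=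
          Real.pow_div_factorial_le_exp _ hx2 n
        have h3 : |x| ^ n ≤ (x ^ 2) ^ n := by
          calc |x| ^ n ≤ |x| ^ (2 * n) := pow_le_pow_right₀ h.le (by omega)
            _ = (|x| ^ 2) ^ n := by rw [pow_mul]
            _ = (x ^ 2) ^ n := by rw [sq_abs]
        have h4 : (x ^ 2) ^ n = (b/2 * x ^ 2) ^ n / (b/2) ^ n := by
          rw [mul_pow]; field_simp
        have h5 : (b/2 * x ^ 2) ^ n / (b/2) ^ n
            ≤ (n ! : ℝ) / (b/2) ^ n * Real.exp (b/2 * x ^ 2) := by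
          calc (b/2 * x ^ 2) ^ n / (b/2) ^ n
              = ((b/2 * x ^ 2) ^ n / (n ! : ℝ)) * ((n ! : ℝ) / (b/2) ^ n) := by
                field_simp
            _ ≤ Real.exp (b/2 * x ^ 2) * ((n ! : ℝ) / (b/2) ^ n) := by
                apply mul_le_mul_of_nonneg_right key (by positivity)
            _ = (n ! : ℝ) / (b/2) ^ n * Real.exp (b/2 * x ^ 2) := by ring
        have h6 : (n ! : ℝ) / (b/2) ^ n * Real.exp (b/2 * x ^ 2)
            ≤ C * Real.exp (b/2 * x ^ 2) := by
          apply mul_le_mul_of_nonneg_right _ hexppos.le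
          rw [hC]; linarith
        linarith
    have : ‖x ^ n * Real.exp (-b * x ^ 2)‖ = |x| ^ n * Real.exp (-b * x ^ 2) := by
      rw [norm_mul, norm_pow, Real.norm_eq_abs, Real.norm_eq_abs,
        Real.abs_exp]
    rw [this]
    calc |x| ^ n * Real.exp (-b * x ^ 2)
        ≤ (C * Real.exp (b/2 * x ^ 2)) * Real.exp (-b * x ^ 2) := by
          apply mul_le_mul_of_nonneg_right h1 (Real.exp_pos _).le
      _ = C * Real.exp (-(b/2) * x ^ 2) := by
          rw [mul_assoc, ← Real.exp_add]; ring_nf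

lemma integrable_poly_mul_gauss (P : ℝ[X]) :
    Integrable fun x : ℝ => P.eval x * gauss x := by
  induction P using Polynomial.induction_on' with
  | add p q hp hq => simp only [eval_add, add_mul]; exact hp.add hq
  | monomial k a =>
    have := (integrable_pow_mul_gauss' (by norm_num : (0:ℝ) < 1/2) k).const_mul a
    apply this.congr
    filter_upwards with x
    simp [gauss_eq, eval_monomial, mul_assoc]


noncomputable def H (k : ℕ) : ℝ[X] := (hermite k).map (algebraMap ℤ ℝ)

lemma H_natDegree (k : ℕ) : (H k).natDegree = k := by
  rw [H, (hermite_monic k).natDegree_map, natDegree_hermite]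

lemma H_monic (k : ℕ) : (H k).Monic := (hermite_monic k).map _

lemma deriv_iter_gauss (k : ℕ) (x : ℝ) :
    deriv^[k] gauss x = (-1:ℝ)^k * (H k).eval x * gauss x := by
  have := Polynomial.deriv_gaussian_eq_hermite_mul_gaussian k x
  have h2 : (Polynomial.aeval x) (hermite k) = (H k).eval x := by
    rw [Polynomial.aeval_def, Polynomial.eval₂_eq_eval_map, H]
  rw [h2] at this
  exact this

lemma differentiable_gauss : Differentiable ℝ gauss := by
  unfold gauss
  fun_prop

lemma differentiable_deriv_iter_gauss (k : ℕ) :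
    Differentiable ℝ (deriv^[k] gauss) := by
  have : deriv^[k] gauss = fun x => (-1:ℝ)^k * (H k).eval x * gauss x :=
    funext (deriv_iter_gauss k)
  rw [this]
  exact (((Polynomial.differentiable _).const_mul _).mul differentiable_gauss)

lemma integrable_mul_iter_gauss (P : ℝ[X]) (m : ℕ) :
    Integrable fun x : ℝ => P.eval x * deriv^[m] gauss x := by
  have h : ∀ x : ℝ, P.eval x * deriv^[m] gauss x
      = (-1:ℝ)^m * ((P * H m).eval x * gauss x) := by
    intro x
    rw [deriv_iter_gauss, Polynomial.eval_mul]; ring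
  simp only [h]
  exact (integrable_poly_mul_gauss (P * H m)).const_mul _

lemma ibp_iter (k : ℕ) (P : ℝ[X]) :
    ∫ x : ℝ, P.eval x * deriv^[k] gauss x
      = (-1:ℝ)^k * ∫ x : ℝ, (Polynomial.derivative^[k] P).eval x * gauss x := by
  induction k generalizing P with
  | zero => simp
  | succ k ih =>
    have hgoal : deriv^[k+1] gauss = deriv (deriv^[k] gauss) :=
      Function.iterate_succ_apply' deriv k gauss
    have hu : ∀ x : ℝ, HasDerivAt (fun y => P.eval y) ((Polynomial.derivative P).eval x) x :=
      fun x => P.hasDerivAt x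
    have hv : ∀ x : ℝ, HasDerivAt (deriv^[k] gauss) (deriv (deriv^[k] gauss) x) x :=
      fun x => (differentiable_deriv_iter_gauss k x).hasDerivAt
    have huv' : Integrable ((fun y => P.eval y) * deriv (deriv^[k] gauss)) := by
      have := integrable_mul_iter_gauss P (k+1)
      rw [hgoal] at this
      exact this
    have hu'v : Integrable ((fun y => (Polynomial.derivative P).eval y) * deriv^[k] gauss) :=
      integrable_mul_iter_gauss (Polynomial.derivative P) k
    have huv : Integrable ((fun y => P.eval y) * deriv^[k] gauss) :=
      integrable_mul_iter_gauss P k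
    rw [hgoal, Function.iterate_succ_apply]
    calc ∫ x : ℝ, P.eval x * deriv (deriv^[k] gauss) x
        = - ∫ x : ℝ, (Polynomial.derivative P).eval x * deriv^[k] gauss x :=
          MeasureTheory.integral_mul_deriv_eq_deriv_mul_of_integrable (fun x _ => hu x) (fun x _ => hv x) huv' hu'v huv
      _ = - ((-1:ℝ)^k * ∫ x : ℝ,
            (Polynomial.derivative^[k] (Polynomial.derivative P)).eval x * gauss x) := by
          rw [ih]
      _ = (-1:ℝ)^(k+1) * ∫ x : ℝ,
            (Polynomial.derivative^[k] (Polynomial.derivative P)).eval x * gauss x := by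
          ring

lemma integral_gauss : ∫ x : ℝ, gauss x = Real.sqrt (2 * Real.pi) := by
  have : ∀ x : ℝ, gauss x = Real.exp (-(1/2 : ℝ) * x ^ 2) := gauss_eq
  simp only [this]
  rw [integral_gaussian]
  norm_num
  ring

lemma iterate_derivative_H_self (k : ℕ) :
    Polynomial.derivative^[k] (H k) = Polynomial.C (k ! : ℝ) := by
  have hdeg : (Polynomial.derivative^[k] (H k)).natDegree = 0 := by
    have := Polynomial.natDegree_iterate_derivative (H k) k
    rw [H_natDegree] at this
    omega
  rw [Polynomial.eq_C_of_natDegree_eq_zero hdeg]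
  congr 1
  rw [Polynomial.coeff_iterate_derivative]
  simp only [zero_add, Nat.descFactorial_self]
  have : (H k).coeff k = 1 := by
    have := (H_monic k).coeff_natDegree
    rwa [H_natDegree] at this
  rw [this]
  simp

lemma herm_orth (m k : ℕ) :
    ∫ x : ℝ, (H m).eval x * (H k).eval x * gauss x
      = if m = k then (m ! : ℝ) * Real.sqrt (2 * Real.pi) else 0 := by
  have main : ∀ m k : ℕ, m ≤ k →
      (∫ x : ℝ, (H m).eval x * (H k).eval x * gauss x)
        = if m = k then (m ! : ℝ) * Real.sqrt (2 * Real.pi) else 0 := by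
    intro m k hmk
    have hsq : ((-1:ℝ)^k) * ((-1:ℝ)^k) = 1 := by
      rw [← pow_add, ← two_mul, pow_mul]; norm_num
    have h1 : ∀ x : ℝ, (H m).eval x * (H k).eval x * gauss x
        = (-1:ℝ)^k * ((H m).eval x * deriv^[k] gauss x) := by
      intro x
      rw [deriv_iter_gauss k x]
      linear_combination (-((H m).eval x * (H k).eval x * gauss x)) * hsq
    calc ∫ x : ℝ, (H m).eval x * (H k).eval x * gauss x
        = ∫ x : ℝ, (-1:ℝ)^k * ((H m).eval x * deriv^[k] gauss x) := by
          simp only [h1]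
      _ = (-1:ℝ)^k * ∫ x : ℝ, (H m).eval x * deriv^[k] gauss x := by
          rw [MeasureTheory.integral_const_mul]
      _ = (-1:ℝ)^k * ((-1:ℝ)^k * ∫ x : ℝ,
            (Polynomial.derivative^[k] (H m)).eval x * gauss x) := by
          rw [ibp_iter]
      _ = ∫ x : ℝ, (Polynomial.derivative^[k] (H m)).eval x * gauss x := by
          rw [← mul_assoc, hsq, one_mul]
      _ = if m = k then (m ! : ℝ) * Real.sqrt (2 * Real.pi) else 0 := by
          rcases lt_or_eq_of_le hmk with h | h
          · have hz : Polynomial.derivative^[k] (H m) = 0 :=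
              Polynomial.iterate_derivative_eq_zero (by rw [H_natDegree]; exact h)
            rw [hz, if_neg (by omega)]
            simp
          · subst h
            rw [iterate_derivative_H_self, if_pos rfl]
            simp only [Polynomial.eval_C]
            rw [MeasureTheory.integral_const_mul, integral_gauss]
  rcases le_total m k with h | h
  · exact main m k h
  · have := main k m h
    have hsymm : (fun x : ℝ => (H m).eval x * (H k).eval x * gauss x)
        = fun x : ℝ => (H k).eval x * (H m).eval x * gauss x := by
      funext x; ring
    rw [hsymm]
    rw [this]
    by_cases hmk : m = k
    · subst hmk; simp
    · rw [if_neg hmk, if_neg (by omega)]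


noncomputable def f1 (a b : ℕ) : ℝ → ℝ := fun t => (H a).eval t * (H b).eval t * gauss t

lemma integrable_f1 (a b : ℕ) : Integrable (f1 a b) := by
  have h : ∀ t : ℝ, f1 a b t = (H a * H b).eval t * gauss t := by
    intro t; rw [Polynomial.eval_mul, f1]
  have h2 : f1 a b = fun t => (H a * H b).eval t * gauss t := funext h
  rw [h2]
  exact integrable_poly_mul_gauss _

lemma integral_f1 (a b : ℕ) :
    ∫ t : ℝ, f1 a b t = if a = b then (a ! : ℝ) * Real.sqrt (2 * Real.pi) else 0 :=
  herm_orth a b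

/-- sign of a permutation as a real number -/
noncomputable def sgn {n : ℕ} (σ : Equiv.Perm (Fin n)) : ℝ :=
  ((Equiv.Perm.sign σ : ℤ) : ℝ)

lemma sgn_mul_self {n : ℕ} (σ : Equiv.Perm (Fin n)) : sgn σ * sgn σ = 1 := by
  rw [sgn, ← Int.cast_mul, ← Units.val_mul, Int.units_mul_self, Units.val_one, Int.cast_one]

lemma vandermonde_det_eq {n : ℕ} (x : Fin n → ℝ) :
    (Matrix.vandermonde x).det
      = ∑ σ : Equiv.Perm (Fin n), sgn σ * ∏ i : Fin n, (H ((σ i : Fin n) : ℕ)).eval (x i) := by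
  have h1 : (Matrix.vandermonde x).det
      = (Matrix.of fun i j : Fin n => (H ((i : Fin n) : ℕ)).eval (x j)).det := by
    rw [Matrix.det_eval_matrixOfPolynomials_eq_det_vandermonde x (fun j : Fin n => H (j : ℕ))
        (fun i => H_natDegree _) (fun i => H_monic _)]
    rw [← Matrix.det_transpose]
    congr 1
  rw [h1, Matrix.det_apply']
  refine Finset.sum_congr rfl fun σ _ => ?_
  simp only [Matrix.of_apply, sgn]

lemma prod_sub_sq_eq {n : ℕ} (x : Fin n → ℝ) :
    (∏ j : Fin n, ∏ k ∈ Finset.Ioi j, (x j - x k) ^ 2)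
      = (Matrix.vandermonde x).det ^ 2 := by
  rw [Matrix.det_vandermonde, ← Finset.prod_pow]
  refine Finset.prod_congr rfl fun j _ => ?_
  rw [← Finset.prod_pow]
  refine Finset.prod_congr rfl fun k _ => ?_
  ring

lemma core (n : ℕ) :
    ∫ x : Fin n → ℝ,
        (∏ j : Fin n, ∏ k ∈ Finset.Ioi j, (x j - x k) ^ 2) * ∏ j : Fin n, gauss (x j)
      = (n ! : ℝ) * Real.sqrt (2 * Real.pi) ^ n * ∏ i : Fin n, ((i : ℕ)! : ℝ) := by
  classical
  have hstep1 : ∀ x : Fin n → ℝ,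
      (∏ j : Fin n, ∏ k ∈ Finset.Ioi j, (x j - x k) ^ 2) * ∏ j : Fin n, gauss (x j)
        = ∑ σ : Equiv.Perm (Fin n), ∑ τ : Equiv.Perm (Fin n),
            (sgn σ * sgn τ) * ∏ i : Fin n, f1 ((σ i : Fin n) : ℕ) ((τ i : Fin n) : ℕ) (x i) := by
    intro x
    rw [prod_sub_sq_eq, vandermonde_det_eq, sq, Finset.sum_mul_sum]
    rw [Finset.sum_mul]
    refine Finset.sum_congr rfl fun σ _ => ?_
    rw [Finset.sum_mul]
    refine Finset.sum_congr rfl fun τ _ => ?_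
    have hmul : (∏ i : Fin n, f1 ((σ i : Fin n) : ℕ) ((τ i : Fin n) : ℕ) (x i))
        = (∏ i : Fin n, (H ((σ i : Fin n) : ℕ)).eval (x i))
          * (∏ i : Fin n, (H ((τ i : Fin n) : ℕ)).eval (x i))
          * ∏ i : Fin n, gauss (x i) := by
      rw [← Finset.prod_mul_distrib, ← Finset.prod_mul_distrib]
      exact Finset.prod_congr rfl fun i _ => rfl
    rw [hmul]
    ring
  have hint : ∀ σ τ : Equiv.Perm (Fin n),
      Integrable (fun x : Fin n → ℝ =>
        ∏ i : Fin n, f1 ((σ i : Fin n) : ℕ) ((τ i : Fin n) : ℕ) (x i)) :=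
    fun σ τ => Integrable.fin_nat_prod (fun i => integrable_f1 _ _)
  calc ∫ x : Fin n → ℝ,
        (∏ j : Fin n, ∏ k ∈ Finset.Ioi j, (x j - x k) ^ 2) * ∏ j : Fin n, gauss (x j)
      = ∫ x : Fin n → ℝ, ∑ σ : Equiv.Perm (Fin n), ∑ τ : Equiv.Perm (Fin n),
            (sgn σ * sgn τ) * ∏ i : Fin n, f1 ((σ i : Fin n) : ℕ) ((τ i : Fin n) : ℕ) (x i) := by
        exact integral_congr_ae (Filter.Eventually.of_forall hstep1)
    _ = ∑ σ : Equiv.Perm (Fin n), ∑ τ : Equiv.Perm (Fin n),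
            (sgn σ * sgn τ) * ∏ i : Fin n,
              (∫ t : ℝ, f1 ((σ i : Fin n) : ℕ) ((τ i : Fin n) : ℕ) t) := by
        rw [integral_finset_sum _ (fun σ _ =>
          integrable_finset_sum _ (fun τ _ => ((hint σ τ).const_mul _)))]
        refine Finset.sum_congr rfl fun σ _ => ?_
        rw [integral_finset_sum _ (fun τ _ => ((hint σ τ).const_mul _))]
        refine Finset.sum_congr rfl fun τ _ => ?_
        rw [integral_const_mul]
        congr 1
        exact integral_fin_nat_prod_eq_prod
          (fun i => f1 ((σ i : Fin n) : ℕ) ((τ i : Fin n) : ℕ))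
    _ = ∑ σ : Equiv.Perm (Fin n),
          (sgn σ * sgn σ) * ∏ i : Fin n, (((σ i : Fin n) : ℕ)! : ℝ) * Real.sqrt (2 * Real.pi) := by
        refine Finset.sum_congr rfl fun σ _ => ?_
        rw [Finset.sum_eq_single σ]
        · congr 1
          refine Finset.prod_congr rfl fun i _ => ?_
          rw [integral_f1, if_pos rfl]
        · intro τ _ hτ
          have hne : ∃ i : Fin n, σ i ≠ τ i := by
            by_contra hno
            push_neg at hno
            exact hτ (Equiv.ext hno).symm
          obtain ⟨i, hi⟩ := hne
          have : (∫ t : ℝ, f1 ((σ i : Fin n) : ℕ) ((τ i : Fin n) : ℕ) t) = 0 := by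
            rw [integral_f1, if_neg]
            exact fun hc => hi (Fin.val_injective hc)
          rw [Finset.prod_eq_zero (Finset.mem_univ i) this, mul_zero]
        · intro h; exact absurd (Finset.mem_univ σ) h
    _ = ∑ _σ : Equiv.Perm (Fin n),
          Real.sqrt (2 * Real.pi) ^ n * ∏ i : Fin n, ((i : ℕ)! : ℝ) := by
        refine Finset.sum_congr rfl fun σ _ => ?_
        rw [sgn_mul_self, one_mul, Finset.prod_mul_distrib, Finset.prod_const,
          Finset.card_univ, Fintype.card_fin]
        rw [Equiv.prod_comp σ (fun i : Fin n => ((i : ℕ)! : ℝ))]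
        ring
    _ = (n ! : ℝ) * Real.sqrt (2 * Real.pi) ^ n * ∏ i : Fin n, ((i : ℕ)! : ℝ) := by
        rw [Finset.sum_const, Finset.card_univ, Fintype.card_perm, Fintype.card_fin,
          nsmul_eq_mul]
        ring

lemma prod_factorial (n : ℕ) :
    (n ! : ℝ) * ∏ i : Fin n, ((i : ℕ)! : ℝ) = ∏ j ∈ Finset.Icc 1 n, (j ! : ℝ) := by
  induction n with
  | zero => simp
  | succ n ih =>
    rw [Fin.prod_univ_castSucc]
    simp only [Fin.coe_castSucc, Fin.val_last]
    rw [Finset.prod_Icc_succ_top (by omega : 1 ≤ n + 1), ← ih, Nat.factorial_succ]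
    push_cast
    ring

lemma card_sum (n : ℕ) : (∑ j : Fin n, (Finset.Ioi j).card) * 2 = n * (n - 1) := by
  have h1 : ∀ j : Fin n, (Finset.Ioi j).card = n - 1 - (j : ℕ) := fun j => Fin.card_Ioi j
  simp only [h1]
  rw [Fin.sum_univ_eq_sum_range (fun i => n - 1 - i) n]
  rw [Finset.sum_range_reflect (fun i => i) n]
  exact Finset.sum_range_id_mul_two n

end MehtaAux

open MehtaAux

/-- Mehta's integral for `g₀ = 1`:
`∫_{ℝⁿ} ∏_{j<k}(x_j−x_k)² ∏_j e^{−ωx_j²} dx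
  = (2π)^{n/2}/(2ω)^{n(n−1)/2+n/2} ∏_{j=1}^n j!`. -/
theorem stmt10 (n : ℕ) (ω : ℝ) (hω : 0 < ω) :
    ∫ x : Fin n → ℝ,
        (∏ j : Fin n, ∏ k ∈ Finset.Ioi j, (x j - x k) ^ 2) *
          ∏ j : Fin n, Real.exp (-ω * (x j) ^ 2) =
      (2 * Real.pi) ^ ((n : ℝ) / 2) /
          (2 * ω) ^ ((n : ℝ) * ((n : ℝ) - 1) / 2 + (n : ℝ) / 2) *
        ∏ j ∈ Finset.Icc 1 n, (j ! : ℝ) := by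
  classical
  have h2ω : (0:ℝ) < 2 * ω := by linarith
  set c : ℝ := Real.sqrt (2 * ω) with hc_def
  have hc : 0 < c := Real.sqrt_pos.mpr h2ω
  have hc2 : c ^ 2 = 2 * ω := Real.sq_sqrt h2ω.le
  set K : ℕ := ∑ j : Fin n, (Finset.Ioi j).card with hK_def
  have hK2 : (K * 2 : ℕ) = n * (n - 1) := card_sum n
  set F : (Fin n → ℝ) → ℝ := fun x =>
    (∏ j : Fin n, ∏ k ∈ Finset.Ioi j, (x j - x k) ^ 2) *
      ∏ j : Fin n, Real.exp (-ω * (x j) ^ 2) with hF_def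
  have hFcomp : ∀ x : Fin n → ℝ, F (c⁻¹ • x)
      = (c⁻¹) ^ (2 * K) *
        ((∏ j : Fin n, ∏ k ∈ Finset.Ioi j, (x j - x k) ^ 2) * ∏ j : Fin n, gauss (x j)) := by
    intro x
    have hsmul : ∀ j : Fin n, (c⁻¹ • x) j = c⁻¹ * x j := fun j => rfl
    rw [hF_def]
    simp only [hsmul]
    have h1 : ∀ j k : Fin n, (c⁻¹ * x j - c⁻¹ * x k) ^ 2
        = (c⁻¹) ^ 2 * (x j - x k) ^ 2 := by intro j k; ring
    have h2 : ∀ j : Fin n, Real.exp (-ω * (c⁻¹ * x j) ^ 2) = gauss (x j) := by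
      intro j
      rw [gauss]
      congr 1
      have : c ≠ 0 := ne_of_gt hc
      field_simp
      linear_combination (x j ^ 2) * hc2
    simp only [h1, h2]
    rw [show (∏ j : Fin n, ∏ k ∈ Finset.Ioi j, (c⁻¹) ^ 2 * (x j - x k) ^ 2)
        = ((c⁻¹) ^ 2) ^ K * ∏ j : Fin n, ∏ k ∈ Finset.Ioi j, (x j - x k) ^ 2 by
      calc ∏ j : Fin n, ∏ k ∈ Finset.Ioi j, (c⁻¹) ^ 2 * (x j - x k) ^ 2
          = ∏ j : Fin n, (((c⁻¹) ^ 2) ^ (Finset.Ioi j).card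
              * ∏ k ∈ Finset.Ioi j, (x j - x k) ^ 2) :=
            Finset.prod_congr rfl fun j _ => by
              rw [Finset.prod_mul_distrib, Finset.prod_const]
        _ = (∏ j : Fin n, ((c⁻¹) ^ 2) ^ (Finset.Ioi j).card)
              * ∏ j : Fin n, ∏ k ∈ Finset.Ioi j, (x j - x k) ^ 2 :=
            Finset.prod_mul_distrib
        _ = ((c⁻¹) ^ 2) ^ K * ∏ j : Fin n, ∏ k ∈ Finset.Ioi j, (x j - x k) ^ 2 := by
            rw [Finset.prod_pow_eq_pow_sum]]
    rw [← pow_mul]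
    ring
  have hscale := MeasureTheory.Measure.integral_comp_inv_smul (volume : Measure (Fin n → ℝ)) F c
  rw [Module.finrank_fin_fun] at hscale
  have habs : |c ^ n| = c ^ n := abs_of_pos (pow_pos hc n)
  rw [habs, smul_eq_mul] at hscale
  have hleft : ∫ x : Fin n → ℝ, F (c⁻¹ • x)
      = (c⁻¹) ^ (2 * K) * ((n ! : ℝ) * Real.sqrt (2 * Real.pi) ^ n
          * ∏ i : Fin n, ((i : ℕ)! : ℝ)) := by
    rw [show (fun x : Fin n → ℝ => F (c⁻¹ • x)) = fun x =>
        (c⁻¹) ^ (2 * K) *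
          ((∏ j : Fin n, ∏ k ∈ Finset.Ioi j, (x j - x k) ^ 2) * ∏ j : Fin n, gauss (x j))
      from funext hFcomp]
    rw [MeasureTheory.integral_const_mul, core n]
  have hF_int : ∫ x : Fin n → ℝ, F x
      = (c ^ n)⁻¹ * ((c⁻¹) ^ (2 * K) * ((n ! : ℝ) * Real.sqrt (2 * Real.pi) ^ n
          * ∏ i : Fin n, ((i : ℕ)! : ℝ))) := by
    rw [← hleft, hscale]
    field_simp
  rw [hF_def] at hF_int
  rw [hF_int]
  -- now pure algebra
  have hsqrt_pow : ∀ a : ℝ, 0 ≤ a → Real.sqrt a ^ n = a ^ ((n : ℝ) / 2) := by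
    intro a ha
    rw [Real.sqrt_eq_rpow, ← Real.rpow_natCast (a ^ ((1:ℝ)/2)) n, ← Real.rpow_mul ha]
    congr 1
    ring
  have hpow2K : c ^ (2 * K) = (2 * ω) ^ ((n : ℝ) * ((n : ℝ) - 1) / 2) := by
    have h1 : c ^ (2 * K) = (2 * ω) ^ K := by rw [pow_mul, hc2]
    have h3 : ((K : ℕ) : ℝ) = (n : ℝ) * ((n : ℝ) - 1) / 2 := by
      have hcast := congrArg (fun m : ℕ => (m : ℝ)) hK2
      push_cast at hcast
      rcases Nat.eq_zero_or_pos n with h | h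
      · subst h
        have hK0 : K = 0 := by omega
        simp [hK0]
      · have hn1 : ((n - 1 : ℕ) : ℝ) = (n : ℝ) - 1 := by
          have h1n : (1 : ℕ) ≤ n := h
          push_cast [Nat.cast_sub h1n]
          ring
        rw [hn1] at hcast
        linarith
    rw [h1, ← Real.rpow_natCast (2 * ω) K, h3]
  have hcn : c ^ n = (2 * ω) ^ ((n : ℝ) / 2) := hsqrt_pow (2 * ω) h2ω.le
  have h2pi : Real.sqrt (2 * Real.pi) ^ n = (2 * Real.pi) ^ ((n : ℝ) / 2) :=
    hsqrt_pow (2 * Real.pi) (by positivity)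
  have hE : (2 * ω) ^ ((n : ℝ) * ((n : ℝ) - 1) / 2 + (n : ℝ) / 2) = c ^ (2 * K) * c ^ n := by
    rw [Real.rpow_add h2ω, ← hpow2K, ← hcn]
  have hcne : c ≠ 0 := ne_of_gt hc
  rw [← h2pi, hE, ← prod_factorial n, inv_pow]
  have hck : (c : ℝ) ^ (2 * K) ≠ 0 := pow_ne_zero _ hcne
  have hcnn : (c : ℝ) ^ n ≠ 0 := pow_ne_zero _ hcne
  field_simp
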